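/- For every d ≥ 2, the graph G_d has no clique cutset, i.e., there is no clique K ⊆ V(G_d) such that G_d − K is disconnected. -/

import Mathlib

open SimpleGraph

/-- Sorted list of the tuple set `S^d`: tuples with entries in {1,3} except
the last entry which is in {1,2,3,4}, of length between 1 and `d`,
listed in lexicographic order. -/
def Tl : ℕ → List (List ℕ)
  | 0 => []
  | k+1 => [[1]] ++ (Tl k).map (fun a => 1 :: a) ++ [[2], [3]]
            ++ (Tl k).map (fun a => 3 :: a) ++ [[4]]

/-- Strict lexicographic order on tuples (a proper prefix is smaller). -/
def lexLt (a b : List ℕ) : Prop := List.Lex (· < ·) a b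

def lexLe (a b : List ℕ) : Prop := a = b ∨ lexLt a b

/-- `v` is the successor of `u` in the lexicographic order on `S^d`. -/
def IsSucc (d : ℕ) (u v : List ℕ) : Prop :=
  v ∈ Tl d ∧ lexLt u v ∧ ∀ w ∈ Tl d, lexLt u w → lexLe v w

/-- The interval `[a,b]` in `S^d`. -/
def interval (d : ℕ) (a b : List ℕ) : Set (List ℕ) :=
  {c | c ∈ Tl d ∧ lexLe a c ∧ lexLe c b}

/-- `[a,b]` is a proper interval: no interior element has length `l(a)` or `l(b)`. -/
def ProperInterval (d : ℕ) (a b : List ℕ) : Prop :=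
  a ∈ Tl d ∧ b ∈ Tl d ∧ lexLe a b ∧
  ∀ c ∈ interval d a b, c ≠ a → c ≠ b →
    c.length ≠ a.length ∧ c.length ≠ b.length

/-- The set of left endpoints of flat steps of the interval `[a,b]`. -/
def flatSteps (d : ℕ) (a b : List ℕ) : Set (List ℕ) :=
  {c | c ∈ Tl d ∧ lexLe a c ∧ lexLt c b ∧ ∃ v, IsSucc d c v ∧ v.length = c.length}

/-- Vertices of `G_d`: elements of `S^d`, subdivision vertices, and centers. -/
inductive Vtx where
  | elt : List ℕ → Vtx
  | sub : ℕ → Fin 2 → Vtx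
  | ctr : ℕ → Vtx
deriving DecidableEq

/-- The path `P_d` as a list of vertices: the elements of `S^d` in order,
with two subdivision vertices between consecutive elements of equal length
and one otherwise. -/
def pathList (d : ℕ) : List Vtx :=
  ((Tl d).zipIdx.map Prod.swap).flatMap (fun p =>
    Vtx.elt p.2 :: (match (Tl d)[p.1 + 1]? with
      | none => []
      | some b =>
        if p.2.length = b.length then [Vtx.sub p.1 0, Vtx.sub p.1 1]
        else [Vtx.sub p.1 0]))

/-- `x` and `y` are consecutive in the list `l`. -/
def ChainAdj {α : Type} (l : List α) (x y : α) : Prop :=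
  ∃ i, (l[i]? = some x ∧ l[i+1]? = some y) ∨
       (l[i]? = some y ∧ l[i+1]? = some x)

/-- Adjacency from a center vertex. -/
def ctrAdj (d : ℕ) : Vtx → Vtx → Prop
  | Vtx.ctr k, Vtx.ctr m => k ≠ m ∧ 1 ≤ k ∧ k ≤ d ∧ 1 ≤ m ∧ m ≤ d
  | Vtx.ctr k, Vtx.elt a => 1 ≤ k ∧ k ≤ d ∧ a ∈ Tl d ∧ a.length = k
  | _, _ => False

/-- The vertex set of `G_d`. -/
def VSet (d : ℕ) : Finset Vtx :=
  (pathList d).toFinset ∪ (Finset.Icc 1 d).image Vtx.ctr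

def GdAdj (d : ℕ) (x y : Vtx) : Prop :=
  x ≠ y ∧ (ChainAdj (pathList d) x y ∨ ctrAdj d x y ∨ ctrAdj d y x)

/-- The graph `G_d`. -/
def Gd (d : ℕ) : SimpleGraph {x // x ∈ VSet d} where
  Adj x y := GdAdj d x.1 y.1
  symm := by
    constructor
    rintro x y ⟨hne, h⟩
    refine ⟨hne.symm, ?_⟩
    rcases h with ⟨i, hi⟩ | h | h
    · exact Or.inl ⟨i, hi.symm⟩
    · exact Or.inr (Or.inr h)
    · exact Or.inr (Or.inl h)
  loopless := ⟨fun x h => h.1 rfl⟩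

/-- A rank decomposition of a graph `G`: a finite cubic tree together with a
bijection from the vertices of `G` to the leaves of the tree. -/
structure RankDecomp {V : Type} [Fintype V] (G : SimpleGraph V) where
  t : Type
  fin : Fintype t
  tree : SimpleGraph t
  conn : tree.Connected
  acyc : tree.IsAcyclic
  two_le : 2 ≤ Nat.card t
  cubic : ∀ v : t, (tree.neighborSet v).ncard = 1 ∨ (tree.neighborSet v).ncard = 3
  leafEquiv : V ≃ {v : t // (tree.neighborSet v).ncard = 1}

/-- The set of vertices of `G` whose leaf lies on the side of `a` of
the edge `ab` of the decomposition tree. -/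
def RankDecomp.side {V : Type} [Fintype V] {G : SimpleGraph V}
    (D : RankDecomp G) (a b : D.t) : Set V :=
  {x | (D.tree.deleteEdges {s(a, b)}).Reachable (D.leafEquiv x).1 a}

/-- The cutrank function of `G`: the GF(2)-rank of the adjacency submatrix
between `X` and its complement. -/
noncomputable def cutRank {V : Type} [Fintype V] (G : SimpleGraph V) (X : Set V) : ℕ :=
  haveI : Fintype ↥X := Fintype.ofFinite _
  haveI : Fintype ↥(Xᶜ) := Fintype.ofFinite _
  haveI : DecidableRel G.Adj := Classical.decRel _
  Matrix.rank (Matrix.of (fun (x : ↥X) (y : ↥(Xᶜ)) =>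
    if G.Adj x.1 y.1 then (1 : ZMod 2) else 0))

/-- The decomposition `D` has width at most `k`. -/
def RankDecomp.WidthLE {V : Type} [Fintype V] {G : SimpleGraph V}
    (D : RankDecomp G) (k : ℕ) : Prop :=
  ∀ a b : D.t, D.tree.Adj a b → cutRank G (D.side a b) ≤ k

/-- The rank-width of `G`. -/
noncomputable def rankwidth {V : Type} [Fintype V] (G : SimpleGraph V) : ℕ :=
  sInf {k | ∃ D : RankDecomp G, D.WidthLE k}

/-- `l` is an induced path in `G`: its vertices are distinct and two of them
are adjacent in `G` iff they are consecutive on `l`. -/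
def IsInducedPathList {V : Type} (G : SimpleGraph V) (l : List V) : Prop :=
  l.Nodup ∧ ∀ x ∈ l, ∀ y ∈ l, (G.Adj x y ↔ ChainAdj l x y)

/-- The diamond: the complete graph on four vertices minus an edge. -/
def diamond : SimpleGraph (Fin 4) := (⊤ : SimpleGraph (Fin 4)).deleteEdges {s(2, 3)}

section Dev

/-! ### Tl basics -/

lemma mem_Tl_succ_iff {k : ℕ} {a : List ℕ} :
    a ∈ Tl (k+1) ↔ a = [1] ∨ (∃ b ∈ Tl k, a = 1 :: b) ∨ a = [2] ∨ a = [3] ∨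
      (∃ b ∈ Tl k, a = 3 :: b) ∨ a = [4] := by
  simp only [Tl, List.mem_append, List.mem_map, List.mem_cons, List.mem_singleton,
    List.not_mem_nil, or_false]
  aesop

lemma mem_Tl_length : ∀ {d : ℕ} {a : List ℕ}, a ∈ Tl d → 1 ≤ a.length ∧ a.length ≤ d := by
  intro d
  induction d with
  | zero => simp [Tl]
  | succ k ih =>
    intro a ha
    rcases mem_Tl_succ_iff.1 ha with h | ⟨b, hb, rfl⟩ | h | h | ⟨b, hb, rfl⟩ | h <;>
      first
        | (subst h; simp)
        | (rcases ih hb with ⟨h1, h2⟩; simp only [List.length_cons]; omega)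

lemma mem_Tl_ne_nil {d : ℕ} {a : List ℕ} (h : a ∈ Tl d) : a ≠ [] := by
  have := (mem_Tl_length h).1
  intro hh; subst hh; simp at this

lemma one_mem_Tl {d : ℕ} (hd : 1 ≤ d) : [1] ∈ Tl d := by
  obtain ⟨k, rfl⟩ : ∃ k, d = k + 1 := ⟨d - 1, by omega⟩
  simp [Tl]

lemma four_mem_Tl {d : ℕ} (hd : 1 ≤ d) : [4] ∈ Tl d := by
  obtain ⟨k, rfl⟩ : ∃ k, d = k + 1 := ⟨d - 1, by omega⟩
  simp [Tl]

lemma exists_mem_Tl_length {d : ℕ} : ∀ {m : ℕ}, 1 ≤ m → m ≤ d → ∃ a ∈ Tl d, a.length = m := by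
  induction d with
  | zero => intro m h1 h2; omega
  | succ k ih =>
    intro m h1 h2
    rcases Nat.eq_or_lt_of_le h1 with h | h
    · exact ⟨[1], one_mem_Tl (by omega), by simp [← h]⟩
    · obtain ⟨a, ha, hl⟩ := ih (m := m - 1) (by omega) (by omega)
      refine ⟨1 :: a, ?_, by simp [hl]; omega⟩
      exact mem_Tl_succ_iff.2 (Or.inr (Or.inl ⟨a, ha, rfl⟩))

end Dev
section Dev2

lemma Tl_head {k : ℕ} : ∃ t, Tl (k+1) = [1] :: t := ⟨_, rfl⟩

lemma Tl_last {k : ℕ} : ∃ s, Tl (k+1) = s ++ [[4]] := by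
  refine ⟨[[1]] ++ (Tl k).map (fun a => 1 :: a) ++ [[2], [3]] ++ (Tl k).map (fun a => 3 :: a), ?_⟩
  simp [Tl]

lemma Tl_two {k : ℕ} : ∃ t, Tl (k+2) = [1] :: [1,1] :: t := by
  obtain ⟨t, ht⟩ := Tl_head (k := k)
  refine ⟨t.map (fun a => 1 :: a) ++ [[2], [3]] ++ (Tl (k+1)).map (fun a => 3 :: a) ++ [[4]], ?_⟩
  conv_lhs => rw [show Tl (k+2) = [[1]] ++ (Tl (k+1)).map (fun a => 1 :: a) ++ [[2], [3]]
            ++ (Tl (k+1)).map (fun a => 3 :: a) ++ [[4]] from rfl]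
  rw [ht]
  simp

lemma Tl_last_two {k : ℕ} : ∃ s, Tl (k+2) = s ++ [[3,4], [4]] := by
  obtain ⟨s, hs⟩ := Tl_last (k := k)
  refine ⟨[[1]] ++ (Tl (k+1)).map (fun a => 1 :: a) ++ [[2], [3]] ++ s.map (fun a => 3 :: a), ?_⟩
  conv_lhs => rw [show Tl (k+2) = [[1]] ++ (Tl (k+1)).map (fun a => 1 :: a) ++ [[2], [3]]
            ++ (Tl (k+1)).map (fun a => 3 :: a) ++ [[4]] from rfl]
  rw [hs]
  simp

lemma Tl_nodup : ∀ d, (Tl d).Nodup := by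
  intro d
  induction d with
  | zero => simp [Tl]
  | succ k ih =>
    have hinj1 : Function.Injective (fun a : List ℕ => 1 :: a) := fun a b h => by simpa using h
    have hinj3 : Function.Injective (fun a : List ℕ => 3 :: a) := fun a b h => by simpa using h
    have hA : ((Tl k).map (fun a => 1 :: a)).Nodup := ih.map hinj1
    have hB : ((Tl k).map (fun a => 3 :: a)).Nodup := ih.map hinj3
    have memA : ∀ x ∈ (Tl k).map (fun a => 1 :: a), ∃ b, b ≠ [] ∧ x = 1 :: b := by
      intro x hx
      obtain ⟨b, hb, rfl⟩ := List.mem_map.1 hx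
      exact ⟨b, mem_Tl_ne_nil hb, rfl⟩
    have memB : ∀ x ∈ (Tl k).map (fun a => 3 :: a), ∃ b, b ≠ [] ∧ x = 3 :: b := by
      intro x hx
      obtain ⟨b, hb, rfl⟩ := List.mem_map.1 hx
      exact ⟨b, mem_Tl_ne_nil hb, rfl⟩
    show (([[1]] ++ (Tl k).map (fun a => 1 :: a) ++ [[2],[3]] ++ (Tl k).map (fun a => 3 :: a)
            ++ [[4]]) : List (List ℕ)).Nodup
    simp only [List.nodup_append, List.nodup_cons, List.nodup_nil, List.nodup_singleton,
      List.disjoint_singleton, List.singleton_disjoint, List.mem_append, List.mem_cons,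
      List.mem_singleton, List.not_mem_nil, List.disjoint_cons_left, List.disjoint_cons_right,
      List.disjoint_append_left, List.disjoint_append_right, not_or, true_and, and_true]
    have hsA : ∀ n : ℕ, [n] ∉ (Tl k).map (fun a => 1 :: a) := by
      intro n hn
      obtain ⟨b, hb, hx⟩ := memA _ hn
      injection hx with h1 h2; exact hb h2.symm
    have hsB : ∀ n : ℕ, [n] ∉ (Tl k).map (fun a => 3 :: a) := by
      intro n hn
      obtain ⟨b, hb, hx⟩ := memB _ hn
      injection hx with h1 h2; exact hb h2.symm
    have hAB : ((Tl k).map (fun a => 1 :: a)).Disjoint ((Tl k).map (fun a => 3 :: a)) := by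
      intro x hxA hxB
      obtain ⟨b, hb, rfl⟩ := memA _ hxA
      obtain ⟨c, hc, hx⟩ := memB _ hxB
      injection hx with h1 h2; omega
    repeat' apply And.intro
    all_goals first
      | exact hA
      | exact hB
      | exact hAB
      | exact hsA _
      | exact hsB _
      | simp
    all_goals first
      | (intro a ha; exact mem_Tl_ne_nil ha)
      | (rintro a ha a2 h2 rfl; simp at ha; exact mem_Tl_ne_nil h2 ha)
      | (rintro a ha rfl; simp at ha)

end Dev2
section Dev3

def subsFor (i : ℕ) (a b : List ℕ) : List Vtx :=
  if a.length = b.length then [Vtx.sub i 0, Vtx.sub i 1] else [Vtx.sub i 0]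

def pathAux : ℕ → List (List ℕ) → List Vtx
  | _, [] => []
  | _, [a] => [Vtx.elt a]
  | i, a :: b :: t => Vtx.elt a :: (subsFor i a b ++ pathAux (i+1) (b :: t))

lemma flatMap_eq_pathAux (d : ℕ) :
    ∀ (l : List (List ℕ)), ∀ (i : ℕ), List.drop i (Tl d) = l →
    ((l.zipIdx i).map Prod.swap).flatMap (fun p =>
      Vtx.elt p.2 :: (match (Tl d)[p.1 + 1]? with
        | none => []
        | some b => if p.2.length = b.length then [Vtx.sub p.1 0, Vtx.sub p.1 1]
                    else [Vtx.sub p.1 0])) = pathAux i l := by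
  intro l
  induction l with
  | nil => intro i h; simp [pathAux]
  | cons a t ih =>
    intro i h
    have hget : ∀ j, (Tl d)[i + j]? = (a :: t)[j]? := by
      intro j; rw [← List.getElem?_drop, h]
    cases t with
    | nil =>
      have h1 : (Tl d)[i+1]? = none := by
        simpa using hget 1
      simp [pathAux, h1]
    | cons b t' =>
      have h1 : (Tl d)[i + 1]? = some b := hget 1
      have h2 : List.drop (i + 1) (Tl d) = b :: t' := by
        have h3 : List.drop 1 (List.drop i (Tl d)) = _ := List.drop_drop
        rw [h] at h3
        simpa using h3.symm
      rw [List.zipIdx_cons, List.map_cons, List.flatMap_cons, ih (i + 1) h2]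
      simp only [pathAux, subsFor, Prod.swap_prod_mk, h1]
      rfl

lemma pathList_eq_pathAux (d : ℕ) : pathList d = pathAux 0 (Tl d) := by
  rw [pathList]
  exact flatMap_eq_pathAux d (Tl d) 0 (by simp)

lemma mem_pathAux_elim : ∀ (t : List (List ℕ)) (i : ℕ) (x : Vtx), x ∈ pathAux i t →
    (∃ a ∈ t, x = Vtx.elt a) ∨ (∃ j s, x = Vtx.sub j s ∧ i ≤ j) := by
  intro t
  induction t with
  | nil => intro i x hx; simp [pathAux] at hx
  | cons a t ih =>
    intro i x hx
    cases t with
    | nil =>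
      simp [pathAux] at hx
      exact Or.inl ⟨a, by simp, hx⟩
    | cons b t' =>
      simp only [pathAux, List.mem_cons, List.mem_append] at hx
      rcases hx with rfl | hx | hx
      · exact Or.inl ⟨a, by simp, rfl⟩
      · unfold subsFor at hx
        split at hx <;> simp at hx <;>
          rcases hx with rfl | rfl <;> exact Or.inr ⟨i, _, rfl, le_refl _⟩
      · rcases ih (i + 1) x hx with ⟨c, hc, rfl⟩ | ⟨j, s, rfl, hj⟩
        · exact Or.inl ⟨c, by simp [hc], rfl⟩
        · exact Or.inr ⟨j, s, rfl, by omega⟩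

lemma elt_mem_pathAux : ∀ (t : List (List ℕ)) (i : ℕ) (a : List ℕ), a ∈ t →
    Vtx.elt a ∈ pathAux i t := by
  intro t
  induction t with
  | nil => intro i a ha; simp at ha
  | cons b t ih =>
    intro i a ha
    cases t with
    | nil => simp at ha; simp [pathAux, ha]
    | cons c t' =>
      rcases List.mem_cons.1 ha with rfl | ha
      · simp [pathAux]
      · simp only [pathAux, List.mem_cons, List.mem_append]
        exact Or.inr (Or.inr (ih (i+1) a ha))

lemma pathAux_nodup : ∀ (t : List (List ℕ)) (i : ℕ), t.Nodup → (pathAux i t).Nodup := by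
  intro t
  induction t with
  | nil => intro i _; simp [pathAux]
  | cons a t ih =>
    intro i ht
    cases t with
    | nil => simp [pathAux]
    | cons b t' =>
      have ht' : (b :: t').Nodup := (List.nodup_cons.1 ht).2
      have hna : a ∉ b :: t' := (List.nodup_cons.1 ht).1
      have hrest : (pathAux (i+1) (b :: t')).Nodup := ih (i+1) ht'
      have hsub_not : ∀ s : Fin 2, Vtx.sub i s ∉ pathAux (i+1) (b :: t') := by
        intro s hs
        rcases mem_pathAux_elim _ _ _ hs with ⟨c, _, h⟩ | ⟨j, s', h, hj⟩
        · cases h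
        · cases h; omega
      have helt_not : Vtx.elt a ∉ pathAux (i+1) (b :: t') := by
        intro hs
        rcases mem_pathAux_elim _ _ _ hs with ⟨c, hc, h⟩ | ⟨j, s', h, _⟩
        · cases h; exact hna hc
        · cases h
      simp only [pathAux, List.nodup_cons, List.mem_append, not_or]
      refine ⟨⟨?_, helt_not⟩, ?_⟩
      · unfold subsFor; split <;> simp
      · rw [List.nodup_append]
        refine ⟨?_, hrest, ?_⟩
        · unfold subsFor; split <;> simp
        · intro x hx y hy hxy
          subst hxy
          unfold subsFor at hx
          split at hx <;> simp at hx <;>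
            first
              | (rcases hx with rfl | rfl; exact hsub_not _ hy; exact hsub_not _ hy)
              | (cases hx; exact hsub_not _ hy)

lemma pathAux_cons_head (t : List (List ℕ)) (i : ℕ) (a : List ℕ) :
    ∃ r, pathAux i (a :: t) = Vtx.elt a :: r := by
  cases t with
  | nil => exact ⟨[], rfl⟩
  | cons b t' => exact ⟨_, rfl⟩

lemma pathAux_no_elt_elt : ∀ (t : List (List ℕ)) (i n : ℕ) (a b : List ℕ),
    (pathAux i t)[n]? = some (Vtx.elt a) → (pathAux i t)[n + 1]? = some (Vtx.elt b) →
    False := by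
  intro t
  induction t with
  | nil => intro i n a b h1 h2; simp [pathAux] at h1
  | cons c t ih =>
    intro i n a b h1 h2
    cases t with
    | nil =>
      rcases n with _ | n <;> simp [pathAux] at h1 h2
    | cons e t' =>
      by_cases hl : c.length = e.length
      · have heq : pathAux i (c :: e :: t') =
            Vtx.elt c :: Vtx.sub i 0 :: Vtx.sub i 1 :: pathAux (i+1) (e :: t') := by
          simp [pathAux, subsFor, hl]
        rw [heq] at h1 h2
        rcases n with _ | _ | _ | m <;> simp at h1 h2
        exact ih (i+1) m a b h1
          h2
      · have heq : pathAux i (c :: e :: t') =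
            Vtx.elt c :: Vtx.sub i 0 :: pathAux (i+1) (e :: t') := by
          simp [pathAux, subsFor, hl]
        rw [heq] at h1 h2
        rcases n with _ | _ | m <;> simp at h1 h2
        exact ih (i+1) m a b h1
          h2

lemma pathAux_last_two : ∀ (t : List (List ℕ)) (i : ℕ),
    ∃ s m, pathAux i (t ++ [[3,4], [4]]) = s ++ [Vtx.elt [3,4], Vtx.sub m 0, Vtx.elt [4]] := by
  intro t
  induction t with
  | nil =>
    intro i
    exact ⟨[], i, by simp [pathAux, subsFor]⟩
  | cons a t ih =>
    intro i
    obtain ⟨c, rest, hcr⟩ : ∃ c rest, t ++ [([3,4] : List ℕ), [4]] = c :: rest := by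
      cases t with
      | nil => exact ⟨_, _, rfl⟩
      | cons u v => exact ⟨_, _, rfl⟩
    obtain ⟨s, m, hs⟩ := ih (i + 1)
    refine ⟨Vtx.elt a :: (subsFor i a c ++ s), m, ?_⟩
    have : pathAux i ((a :: t) ++ [[3,4],[4]]) =
        Vtx.elt a :: (subsFor i a c ++ pathAux (i+1) (c :: rest)) := by
      rw [List.cons_append, hcr]
      rfl
    rw [this, ← hcr, hs]
    simp

end Dev3
section Dev4

lemma pathList_nodup (d : ℕ) : (pathList d).Nodup := by
  rw [pathList_eq_pathAux]
  exact pathAux_nodup _ 0 (Tl_nodup d)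

lemma mem_pathList_elim {d : ℕ} {x : Vtx} (hx : x ∈ pathList d) :
    (∃ a ∈ Tl d, x = Vtx.elt a) ∨ (∃ j s, x = Vtx.sub j s) := by
  rw [pathList_eq_pathAux] at hx
  rcases mem_pathAux_elim _ _ _ hx with ⟨a, ha, rfl⟩ | ⟨j, s, rfl, _⟩
  · exact Or.inl ⟨a, ha, rfl⟩
  · exact Or.inr ⟨j, s, rfl⟩

lemma ctr_not_mem_pathList {d k : ℕ} : Vtx.ctr k ∉ pathList d := by
  intro h
  rcases mem_pathList_elim h with ⟨a, _, h⟩ | ⟨j, s, h⟩ <;> cases h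

lemma elt_mem_pathList {d : ℕ} {a : List ℕ} (ha : a ∈ Tl d) : Vtx.elt a ∈ pathList d := by
  rw [pathList_eq_pathAux]
  exact elt_mem_pathAux _ 0 a ha

lemma pathList_first_three {d : ℕ} (hd : 2 ≤ d) :
    ∃ r, pathList d = Vtx.elt [1] :: Vtx.sub 0 0 :: Vtx.elt [1,1] :: r := by
  obtain ⟨k, rfl⟩ : ∃ k, d = k + 2 := ⟨d - 2, by omega⟩
  obtain ⟨t, ht⟩ := Tl_two (k := k)
  rw [pathList_eq_pathAux, ht]
  obtain ⟨r, hr⟩ := pathAux_cons_head t 1 [1,1]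
  refine ⟨r, ?_⟩
  show Vtx.elt [1] :: (subsFor 0 [1] [1,1] ++ pathAux 1 ([1,1] :: t)) = _
  rw [hr]
  simp [subsFor]

lemma pathList_last_three {d : ℕ} (hd : 2 ≤ d) :
    ∃ s m, pathList d = s ++ [Vtx.elt [3,4], Vtx.sub m 0, Vtx.elt [4]] := by
  obtain ⟨k, rfl⟩ : ∃ k, d = k + 2 := ⟨d - 2, by omega⟩
  obtain ⟨s, hs⟩ := Tl_last_two (k := k)
  rw [pathList_eq_pathAux, hs]
  exact pathAux_last_two s 0

lemma pathList_no_elt_elt {d : ℕ} {n : ℕ} {a b : List ℕ}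
    (h1 : (pathList d)[n]? = some (Vtx.elt a))
    (h2 : (pathList d)[n+1]? = some (Vtx.elt b)) : False := by
  rw [pathList_eq_pathAux] at h1 h2
  exact pathAux_no_elt_elt _ 0 n a b h1 h2

lemma chainAdj_mem {α : Type} {l : List α} {x y : α} (h : ChainAdj l x y) : x ∈ l ∧ y ∈ l := by
  obtain ⟨i, h | h⟩ := h
  · exact ⟨List.mem_of_getElem? h.1, List.mem_of_getElem? h.2⟩
  · exact ⟨List.mem_of_getElem? h.2, List.mem_of_getElem? h.1⟩

lemma chainAdj_of_append {α : Type} {l u w : List α} {x y : α}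
    (h : l = u ++ x :: y :: w) : ChainAdj l x y := by
  refine ⟨u.length, Or.inl ⟨?_, ?_⟩⟩
  · rw [h, List.getElem?_append_right (le_refl _)]
    simp
  · rw [h, List.getElem?_append_right (by omega)]
    simp

lemma nodup_get?_inj {α : Type} {l : List α} (hl : l.Nodup) {m n : ℕ} {x : α}
    (h1 : l[m]? = some x) (h2 : l[n]? = some x) : m = n := by
  obtain ⟨hm, hm'⟩ := List.getElem?_eq_some_iff.1 h1
  obtain ⟨hn, hn'⟩ := List.getElem?_eq_some_iff.1 h2
  exact (hl.getElem_inj_iff).1 (hm'.trans hn'.symm)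

lemma chainAdj_positions {α : Type} {l : List α} (hl : l.Nodup) {x y : α} {m n : ℕ}
    (h : ChainAdj l x y) (hm : l[m]? = some x) (hn : l[n]? = some y) :
    n = m + 1 ∨ m = n + 1 := by
  obtain ⟨i, ⟨h1, h2⟩ | ⟨h1, h2⟩⟩ := h
  · have := nodup_get?_inj hl hm h1
    have := nodup_get?_inj hl hn h2
    omega
  · have := nodup_get?_inj hl hm h2
    have := nodup_get?_inj hl hn h1
    omega

lemma pathList_length_ge {d : ℕ} (hd : 2 ≤ d) : 3 ≤ (pathList d).length := by
  obtain ⟨r, hr⟩ := pathList_first_three hd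
  rw [hr]
  simp

end Dev4
section Dev5

variable {d : ℕ} {K : Set {x // x ∈ VSet d}}

lemma mem_VSet_of_mem_pathList {x : Vtx} (hx : x ∈ pathList d) : x ∈ VSet d :=
  Finset.mem_union.2 (Or.inl (List.mem_toFinset.2 hx))

lemma ctr_mem_VSet {k : ℕ} (h1 : 1 ≤ k) (h2 : k ≤ d) : Vtx.ctr k ∈ VSet d :=
  Finset.mem_union.2 (Or.inr (Finset.mem_image.2 ⟨k, Finset.mem_Icc.2 ⟨h1, h2⟩, rfl⟩))

lemma induce_adj {x y : Vtx} (hxv : x ∈ VSet d) (hyv : y ∈ VSet d)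
    (hxk : (⟨x, hxv⟩ : {x // x ∈ VSet d}) ∈ Kᶜ) (hyk : (⟨y, hyv⟩ : {x // x ∈ VSet d}) ∈ Kᶜ)
    (h : GdAdj d x y) :
    ((Gd d).induce Kᶜ).Adj ⟨⟨x, hxv⟩, hxk⟩ ⟨⟨y, hyv⟩, hyk⟩ := h

lemma gdadj_ctr_ctr {k m : ℕ} (hne : k ≠ m) (hk1 : 1 ≤ k) (hk2 : k ≤ d)
    (hm1 : 1 ≤ m) (hm2 : m ≤ d) : GdAdj d (Vtx.ctr k) (Vtx.ctr m) := by
  refine ⟨by simp [hne], Or.inr (Or.inl ?_)⟩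
  exact ⟨hne, hk1, hk2, hm1, hm2⟩

lemma gdadj_ctr_elt {k : ℕ} {a : List ℕ} (hk1 : 1 ≤ k) (hk2 : k ≤ d)
    (ha : a ∈ Tl d) (hl : a.length = k) : GdAdj d (Vtx.ctr k) (Vtx.elt a) := by
  exact ⟨by simp, Or.inr (Or.inl ⟨hk1, hk2, ha, hl⟩)⟩

/-- Reachability from the head of a K-free contiguous segment of the path. -/
lemma reach_from_head :
    ∀ (r : List Vtx) (a : Vtx) (u v : List Vtx), pathList d = u ++ (a :: r) ++ v →
    (∀ x ∈ a :: r, ∀ hv : x ∈ VSet d, (⟨x, hv⟩ : {x // x ∈ VSet d}) ∉ K) →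
    ∀ y ∈ a :: r, ∀ (hva : a ∈ VSet d) (hka : (⟨a, hva⟩ : {x // x ∈ VSet d}) ∈ Kᶜ)
      (hvy : y ∈ VSet d) (hky : (⟨y, hvy⟩ : {x // x ∈ VSet d}) ∈ Kᶜ),
      ((Gd d).induce Kᶜ).Reachable ⟨⟨a, hva⟩, hka⟩ ⟨⟨y, hvy⟩, hky⟩ := by
  intro r
  induction r with
  | nil =>
    intro a u v h hK y hy hva hka hvy hky
    rcases List.mem_singleton.1 hy with rfl
    exact Reachable.refl _
  | cons b r'' ih =>
    intro a u v h hK y hy hva hka hvy hky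
    rcases List.mem_cons.1 hy with rfl | hy'
    · exact Reachable.refl _
    · have h' : pathList d = u ++ a :: b :: (r'' ++ v) := by
        rw [h]; simp
      have hab : a ≠ b := by
        have hnd := pathList_nodup d
        rw [h'] at hnd
        have h2 := (List.nodup_append.1 hnd).2.1
        intro e
        exact (List.nodup_cons.1 h2).1 (by rw [e]; exact List.mem_cons_self)
      have hvb : b ∈ VSet d := mem_VSet_of_mem_pathList (by rw [h']; simp)
      have hkb : (⟨b, hvb⟩ : {x // x ∈ VSet d}) ∈ Kᶜ := hK b (by simp) hvb
      have hadj : ((Gd d).induce Kᶜ).Adj ⟨⟨a, hva⟩, hka⟩ ⟨⟨b, hvb⟩, hkb⟩ :=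
        induce_adj _ _ _ _ ⟨by simp [hab], Or.inl (chainAdj_of_append h')⟩
      have hrest : ((Gd d).induce Kᶜ).Reachable ⟨⟨b, hvb⟩, hkb⟩ ⟨⟨y, hvy⟩, hky⟩ := by
        refine ih b (u ++ [a]) v ?_ ?_ y hy' hvb hkb hvy hky
        · rw [h]; simp
        · intro x hx hv; exact hK x (by simp [List.mem_cons.1 hx]) hv
      exact (hadj.reachable).trans hrest

/-- Any two vertices of a K-free contiguous segment of the path are reachable. -/
lemma reach_in_segment (m u v : List Vtx) (h : pathList d = u ++ m ++ v)
    (hKm : ∀ x ∈ m, ∀ hv : x ∈ VSet d, (⟨x, hv⟩ : {x // x ∈ VSet d}) ∉ K)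
    (x : Vtx) (hx : x ∈ m) (y : Vtx) (hy : y ∈ m)
    (hvx : x ∈ VSet d) (hkx : (⟨x, hvx⟩ : {x // x ∈ VSet d}) ∈ Kᶜ)
    (hvy : y ∈ VSet d) (hky : (⟨y, hvy⟩ : {x // x ∈ VSet d}) ∈ Kᶜ) :
    ((Gd d).induce Kᶜ).Reachable ⟨⟨x, hvx⟩, hkx⟩ ⟨⟨y, hvy⟩, hky⟩ := by
  obtain ⟨a, r, rfl⟩ : ∃ a r, m = a :: r := by
    cases m with
    | nil => cases hx
    | cons a r => exact ⟨a, r, rfl⟩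
  have hva : a ∈ VSet d := mem_VSet_of_mem_pathList (by rw [h]; simp)
  have hka : (⟨a, hva⟩ : {x // x ∈ VSet d}) ∈ Kᶜ := hKm a (by simp) hva
  exact (reach_from_head r a u v h hKm x hx hva hka hvx hkx).symm.trans
    (reach_from_head r a u v h hKm y hy hva hka hvy hky)

end Dev5
section Dev6

lemma list_split {α : Type} (l : List α) (P : α → Prop)
    (hex : ∃ x ∈ l, P x)
    (hwin : ∀ m n x y, l[m]? = some x → P x → l[n]? = some y → P y →
      m ≤ n → n ≤ m + 1) :
    ∃ u r v, l = u ++ r ++ v ∧ (∀ x ∈ u, ¬P x) ∧ (∀ x ∈ v, ¬P x) ∧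
      (∀ x ∈ r, P x) ∧ r ≠ [] ∧ r.length ≤ 2 := by
  classical
  obtain ⟨x0, hx0, hPx0⟩ := hex
  obtain ⟨n0, hn0⟩ := List.mem_iff_getElem?.1 hx0
  have hexn : ∃ n, ∃ x, l[n]? = some x ∧ P x := ⟨n0, x0, hn0, hPx0⟩
  set i := Nat.find hexn with hi
  obtain ⟨xi, hxi, hPxi⟩ := Nat.find_spec hexn
  have hmin : ∀ m, m < i → ∀ x, l[m]? = some x → ¬P x := by
    intro m hm x hx hPx
    exact Nat.find_min hexn hm ⟨x, hx, hPx⟩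
  have hil : i < l.length := (List.getElem?_eq_some_iff.1 hxi).1
  have hu : ∀ x ∈ l.take i, ¬P x := by
    intro x hx
    obtain ⟨m, hm⟩ := List.mem_iff_getElem?.1 hx
    have hml : m < (l.take i).length := (List.getElem?_eq_some_iff.1 hm).1
    have hmi : m < i := by
      rw [List.length_take] at hml
      omega
    exact hmin m hmi x (by rwa [List.getElem?_take_of_lt hmi] at hm)
  have hdropi : l.drop i = xi :: l.drop (i+1) := by
    obtain ⟨h, hget⟩ := List.getElem?_eq_some_iff.1 hxi
    rw [List.drop_eq_getElem_cons h, hget]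
  by_cases h2 : ∃ x, l[i+1]? = some x ∧ P x
  · obtain ⟨xj, hxj, hPxj⟩ := h2
    refine ⟨l.take i, [xi, xj], l.drop (i+2), ?_, hu, ?_, ?_, by simp, by simp⟩
    · conv_lhs => rw [← List.take_append_drop i l]
      rw [hdropi]
      have hthis : l.drop (i+1) = xj :: l.drop (i+2) := by
        obtain ⟨h, hget⟩ := List.getElem?_eq_some_iff.1 hxj
        rw [List.drop_eq_getElem_cons h, hget]
      rw [hthis]
      simp
    · intro x hx hPx
      obtain ⟨m, hm⟩ := List.mem_iff_getElem?.1 hx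
      rw [List.getElem?_drop] at hm
      have := hwin i (i+2+m) xi x hxi hPxi hm hPx
        (by omega)
      omega
    · intro x hx
      rcases List.mem_pair.1 hx with rfl | rfl
      · exact hPxi
      · exact hPxj
  · refine ⟨l.take i, [xi], l.drop (i+1), ?_, hu, ?_, ?_, by simp, by simp⟩
    · conv_lhs => rw [← List.take_append_drop i l]
      rw [hdropi]
      simp
    · intro x hx hPx
      obtain ⟨m, hm⟩ := List.mem_iff_getElem?.1 hx
      rw [List.getElem?_drop] at hm
      have := hwin i (i+1+m) xi x hxi hPxi hm hPx
        (by omega)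
      have hm0 : m = 0 := by omega
      subst hm0
      exact h2 ⟨x, by rwa [Nat.add_zero] at hm, hPx⟩
    · intro x hx
      rcases List.mem_singleton.1 hx with rfl
      exact hPxi

variable {d : ℕ} {K : Set {x // x ∈ VSet d}}

/-- Reachability between two "good" elements: surviving tuple vertices whose
center also survives. -/
lemma reach_elt_elt (hd : 2 ≤ d) (a b : List ℕ) (ha : a ∈ Tl d) (hb : b ∈ Tl d)
    (hca : ∀ hv : Vtx.ctr a.length ∈ VSet d, (⟨Vtx.ctr a.length, hv⟩ : {x // x ∈ VSet d}) ∉ K)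
    (hcb : ∀ hv : Vtx.ctr b.length ∈ VSet d, (⟨Vtx.ctr b.length, hv⟩ : {x // x ∈ VSet d}) ∉ K)
    (hva : Vtx.elt a ∈ VSet d) (hka : (⟨Vtx.elt a, hva⟩ : {x // x ∈ VSet d}) ∈ Kᶜ)
    (hvb : Vtx.elt b ∈ VSet d) (hkb : (⟨Vtx.elt b, hvb⟩ : {x // x ∈ VSet d}) ∈ Kᶜ) :
    ((Gd d).induce Kᶜ).Reachable ⟨⟨Vtx.elt a, hva⟩, hka⟩ ⟨⟨Vtx.elt b, hvb⟩, hkb⟩ := by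
  obtain ⟨ha1, ha2⟩ := mem_Tl_length ha
  obtain ⟨hb1, hb2⟩ := mem_Tl_length hb
  have hvca : Vtx.ctr a.length ∈ VSet d := ctr_mem_VSet ha1 ha2
  have hvcb : Vtx.ctr b.length ∈ VSet d := ctr_mem_VSet hb1 hb2
  have hkca : (⟨Vtx.ctr a.length, hvca⟩ : {x // x ∈ VSet d}) ∈ Kᶜ := hca hvca
  have hkcb : (⟨Vtx.ctr b.length, hvcb⟩ : {x // x ∈ VSet d}) ∈ Kᶜ := hcb hvcb
  have e1 : ((Gd d).induce Kᶜ).Adj ⟨⟨Vtx.ctr a.length, hvca⟩, hkca⟩ ⟨⟨Vtx.elt a, hva⟩, hka⟩ :=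
    induce_adj _ _ _ _ (gdadj_ctr_elt ha1 ha2 ha rfl)
  have e2 : ((Gd d).induce Kᶜ).Adj ⟨⟨Vtx.ctr b.length, hvcb⟩, hkcb⟩ ⟨⟨Vtx.elt b, hvb⟩, hkb⟩ :=
    induce_adj _ _ _ _ (gdadj_ctr_elt hb1 hb2 hb rfl)
  by_cases hab : a.length = b.length
  · have e1' : ((Gd d).induce Kᶜ).Adj ⟨⟨Vtx.ctr b.length, hvcb⟩, hkcb⟩ ⟨⟨Vtx.elt a, hva⟩, hka⟩ :=
      induce_adj _ _ _ _ (gdadj_ctr_elt hb1 hb2 ha hab)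
    exact (e1'.symm.reachable).trans e2.reachable
  · have e3 : ((Gd d).induce Kᶜ).Adj ⟨⟨Vtx.ctr a.length, hvca⟩, hkca⟩
        ⟨⟨Vtx.ctr b.length, hvcb⟩, hkcb⟩ :=
      induce_adj _ _ _ _ (gdadj_ctr_ctr hab ha1 ha2 hb1 hb2)
    exact (e1.symm.reachable).trans ((e3.reachable).trans e2.reachable)

/-- Reachability from a surviving center to a good element. -/
lemma reach_ctr_elt (hd : 2 ≤ d) (m : ℕ) (b : List ℕ) (hm1 : 1 ≤ m) (hm2 : m ≤ d)
    (hb : b ∈ Tl d)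
    (hcb : ∀ hv : Vtx.ctr b.length ∈ VSet d, (⟨Vtx.ctr b.length, hv⟩ : {x // x ∈ VSet d}) ∉ K)
    (hvm : Vtx.ctr m ∈ VSet d) (hkm : (⟨Vtx.ctr m, hvm⟩ : {x // x ∈ VSet d}) ∈ Kᶜ)
    (hvb : Vtx.elt b ∈ VSet d) (hkb : (⟨Vtx.elt b, hvb⟩ : {x // x ∈ VSet d}) ∈ Kᶜ) :
    ((Gd d).induce Kᶜ).Reachable ⟨⟨Vtx.ctr m, hvm⟩, hkm⟩ ⟨⟨Vtx.elt b, hvb⟩, hkb⟩ := by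
  obtain ⟨hb1, hb2⟩ := mem_Tl_length hb
  by_cases hmb : m = b.length
  · subst hmb
    exact (induce_adj _ _ _ _ (gdadj_ctr_elt hm1 hm2 hb rfl)).reachable
  · have hvcb : Vtx.ctr b.length ∈ VSet d := ctr_mem_VSet hb1 hb2
    have hkcb : (⟨Vtx.ctr b.length, hvcb⟩ : {x // x ∈ VSet d}) ∈ Kᶜ := hcb hvcb
    have e3 : ((Gd d).induce Kᶜ).Adj ⟨⟨Vtx.ctr m, hvm⟩, hkm⟩ ⟨⟨Vtx.ctr b.length, hvcb⟩, hkcb⟩ :=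
      induce_adj _ _ _ _ (gdadj_ctr_ctr hmb hm1 hm2 hb1 hb2)
    exact (e3.reachable).trans
      (induce_adj _ _ _ _ (gdadj_ctr_elt hb1 hb2 hb rfl)).reachable

lemma ctrAdj_cases {x y : Vtx} (h : ctrAdj d x y) :
    (∃ k m, x = Vtx.ctr k ∧ y = Vtx.ctr m ∧ k ≠ m ∧ 1 ≤ k ∧ k ≤ d ∧ 1 ≤ m ∧ m ≤ d) ∨
    (∃ k a, x = Vtx.ctr k ∧ y = Vtx.elt a ∧ 1 ≤ k ∧ k ≤ d ∧ a ∈ Tl d ∧ a.length = k) := by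
  cases x <;> cases y <;> first
    | (obtain ⟨h1, h2, h3, h4, h5⟩ := h; exact Or.inl ⟨_, _, rfl, rfl, h1, h2, h3, h4, h5⟩)
    | (obtain ⟨h1, h2, h3, h4⟩ := h; exact Or.inr ⟨_, _, rfl, rfl, h1, h2, h3, h4⟩)
    | cases h

end Dev6
section Dev7

lemma oneone_mem_Tl {d : ℕ} (hd : 2 ≤ d) : [1,1] ∈ Tl d := by
  obtain ⟨k, rfl⟩ : ∃ k, d = k + 2 := ⟨d - 2, by omega⟩
  obtain ⟨t, ht⟩ := Tl_two (k := k)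
  rw [ht]; simp

lemma threefour_mem_Tl {d : ℕ} (hd : 2 ≤ d) : [3,4] ∈ Tl d := by
  obtain ⟨k, rfl⟩ : ∃ k, d = k + 2 := ⟨d - 2, by omega⟩
  obtain ⟨s, hs⟩ := Tl_last_two (k := k)
  rw [hs]; simp

end Dev7

theorem stmt10_aux (d : ℕ) (hd : 2 ≤ d) (K : Set {x // x ∈ VSet d})
    (hK : (Gd d).IsClique K) : ((Gd d).induce Kᶜ).Connected := by
  classical
  rw [SimpleGraph.connected_iff_exists_forall_reachable]
  set P : Vtx → Prop := fun x => ∃ hv : x ∈ VSet d, (⟨x, hv⟩ : {x // x ∈ VSet d}) ∈ K with hPdef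
  have hnotP : ∀ {x : Vtx} (hv : x ∈ VSet d), ¬ P x →
      (⟨x, hv⟩ : {x // x ∈ VSet d}) ∈ Kᶜ := by
    intro x hv h
    exact fun hk => h ⟨hv, hk⟩
  have hPadj : ∀ {x y : Vtx}, P x → P y → x ≠ y → GdAdj d x y := by
    rintro x y ⟨hvx, hx⟩ ⟨hvy, hy⟩ hne
    exact hK hx hy (fun e => hne (congrArg Subtype.val e))
  obtain ⟨r3, h3⟩ := pathList_first_three hd
  obtain ⟨s3, m3, hl3⟩ := pathList_last_three hd
  have hnd := pathList_nodup d
  have hwin : ∀ m n x y, (pathList d)[m]? = some x → P x → (pathList d)[n]? = some y →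
      P y → m ≤ n → n ≤ m + 1 := by
    intro m n x y hm hPx hn hPy hmn
    by_cases hxy : x = y
    · subst hxy
      have := nodup_get?_inj hnd hm hn
      omega
    · rcases (hPadj hPx hPy hxy).2 with hc | hc | hc
      · rcases chainAdj_positions hnd hc hm hn with h | h <;> omega
      · rcases ctrAdj_cases hc with ⟨k, m', h1, _⟩ | ⟨k, a, h1, _⟩ <;>
          (rw [h1] at hm; exact absurd (List.mem_of_getElem? hm) ctr_not_mem_pathList)
      · rcases ctrAdj_cases hc with ⟨k, m', h1, _⟩ | ⟨k, a, h1, _⟩ <;>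
          (rw [h1] at hn; exact absurd (List.mem_of_getElem? hn) ctr_not_mem_pathList)
  by_cases hPex : ∃ x ∈ pathList d, P x
  · -- CASE B : some path vertex is in K
    obtain ⟨u, r, v, hsplit, hu, hv, hr, hrne, hrlen⟩ := list_split (pathList d) P hPex hwin
    have huK : ∀ x ∈ u, ∀ hv' : x ∈ VSet d, (⟨x, hv'⟩ : {x // x ∈ VSet d}) ∉ K :=
      fun x hx hv' hk => hu x hx ⟨hv', hk⟩
    have hvK : ∀ x ∈ v, ∀ hv' : x ∈ VSet d, (⟨x, hv'⟩ : {x // x ∈ VSet d}) ∉ K :=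
      fun x hx hv' hk => hv x hx ⟨hv', hk⟩
    have humem : ∀ x ∈ u, x ∈ pathList d := by
      intro x hx; rw [hsplit]; simp [hx]
    have hvmem : ∀ x ∈ v, x ∈ pathList d := by
      intro x hx; rw [hsplit]; simp [hx]
    have hrmem : ∀ x ∈ r, x ∈ pathList d := by
      intro x hx; rw [hsplit]; simp [hx]
    -- heads and tails of the path
    have headU : ∀ (u' w : List Vtx), pathList d = u' ++ w → u' ≠ [] → Vtx.elt [1] ∈ u' := by
      intro u' w h hne
      obtain ⟨x, u₂, rfl⟩ := List.exists_cons_of_ne_nil hne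
      have h' : x :: (u₂ ++ w) = Vtx.elt [1] :: Vtx.sub 0 0 :: Vtx.elt [1,1] :: r3 := by
        rw [← List.cons_append, ← h, h3]
      injection h' with h1 _
      simp [h1]
    have lastV : ∀ (w v' : List Vtx), pathList d = w ++ v' → v' ≠ [] → Vtx.elt [4] ∈ v' := by
      intro w v' h hne
      obtain ⟨v₂, z, hv'⟩ := (List.eq_nil_or_concat v').resolve_left hne
      rw [List.concat_eq_append] at hv'
      subst hv'
      have e0 : (w ++ v₂) ++ [z] = (s3 ++ [Vtx.elt [3,4], Vtx.sub m3 0]) ++ [Vtx.elt [4]] := by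
        rw [List.append_assoc, ← h, hl3]
        simp
      obtain ⟨-, hz⟩ := List.append_inj' e0 (by simp)
      have : z = Vtx.elt [4] := by simpa using hz
      simp [this]
    -- segment reachability inside u and inside v
    have segu : ∀ x ∈ u, ∀ y ∈ u, ∀ (hvx : x ∈ VSet d) (hkx : (⟨x, hvx⟩ : _) ∈ Kᶜ)
        (hvy : y ∈ VSet d) (hky : (⟨y, hvy⟩ : _) ∈ Kᶜ),
        ((Gd d).induce Kᶜ).Reachable ⟨⟨x, hvx⟩, hkx⟩ ⟨⟨y, hvy⟩, hky⟩ := by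
      intro x hx y hy hvx hkx hvy hky
      exact reach_in_segment u [] (r ++ v) (by rw [hsplit]; simp) huK x hx y hy hvx hkx hvy hky
    have segv : ∀ x ∈ v, ∀ y ∈ v, ∀ (hvx : x ∈ VSet d) (hkx : (⟨x, hvx⟩ : _) ∈ Kᶜ)
        (hvy : y ∈ VSet d) (hky : (⟨y, hvy⟩ : _) ∈ Kᶜ),
        ((Gd d).induce Kᶜ).Reachable ⟨⟨x, hvx⟩, hkx⟩ ⟨⟨y, hvy⟩, hky⟩ := by
      intro x hx y hy hvx hkx hvy hky
      exact reach_in_segment v (u ++ r) [] (by rw [hsplit]; simp) hvK x hx y hy hvx hkx hvy hky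
    -- shared assembly: given a good vertex on each nonempty side, conclude
    have assemble :
        (u ≠ [] → ∃ a, Vtx.elt a ∈ u ∧ a ∈ Tl d ∧ ¬ P (Vtx.ctr a.length)) →
        (v ≠ [] → ∃ a, Vtx.elt a ∈ v ∧ a ∈ Tl d ∧ ¬ P (Vtx.ctr a.length)) →
        ∃ w0, ∀ w, ((Gd d).induce Kᶜ).Reachable w0 w := by
      intro c1 c2
      have huv : u ≠ [] ∨ v ≠ [] := by
        by_contra hnn
        push_neg at hnn
        obtain ⟨h1, h2⟩ := hnn
        have hlen := pathList_length_ge hd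
        rw [hsplit, h1, h2] at hlen
        simp at hlen
        omega
      obtain ⟨g, hgmem, hgT, hgC⟩ :
          ∃ a, (Vtx.elt a ∈ u ∨ Vtx.elt a ∈ v) ∧ a ∈ Tl d ∧ ¬ P (Vtx.ctr a.length) := by
        rcases huv with h | h
        · obtain ⟨a, h1, h2, h3⟩ := c1 h
          exact ⟨a, Or.inl h1, h2, h3⟩
        · obtain ⟨a, h1, h2, h3⟩ := c2 h
          exact ⟨a, Or.inr h1, h2, h3⟩
      have hgp : Vtx.elt g ∈ pathList d := by
        rcases hgmem with h | h
        exacts [humem _ h, hvmem _ h]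
      have hvg : Vtx.elt g ∈ VSet d := mem_VSet_of_mem_pathList hgp
      have hkg : (⟨Vtx.elt g, hvg⟩ : {x // x ∈ VSet d}) ∈ Kᶜ := by
        rcases hgmem with h | h
        exacts [huK _ h hvg, hvK _ h hvg]
      have goodreach : ∀ b, b ∈ Tl d → ¬ P (Vtx.ctr b.length) →
          ∀ (hvb : Vtx.elt b ∈ VSet d) (hkb : (⟨Vtx.elt b, hvb⟩ : {x // x ∈ VSet d}) ∈ Kᶜ),
          ((Gd d).induce Kᶜ).Reachable ⟨⟨Vtx.elt b, hvb⟩, hkb⟩ ⟨⟨Vtx.elt g, hvg⟩, hkg⟩ :=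
        fun b hbT hbC hvb hkb =>
          reach_elt_elt hd b g hbT hgT (fun hv' hk' => hbC ⟨hv', hk'⟩)
            (fun hv' hk' => hgC ⟨hv', hk'⟩) hvb hkb hvg hkg
      refine ⟨⟨⟨Vtx.elt g, hvg⟩, hkg⟩, ?_⟩
      rintro ⟨⟨x, hvx⟩, hkx⟩
      refine Reachable.symm ?_
      rcases Finset.mem_union.1 hvx with hxp | hxc
      · have hxpl := List.mem_toFinset.1 hxp
        have hxuv : x ∈ u ∨ x ∈ v := by
          have hx3 : x ∈ u ++ r ++ v := by rw [← hsplit]; exact hxpl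
          rcases List.mem_append.1 hx3 with h' | h'
          · rcases List.mem_append.1 h' with h'' | h''
            · exact Or.inl h''
            · exfalso
              obtain ⟨hv', hk'⟩ := hr x h''
              exact hkx hk'
          · exact Or.inr h'
        rcases hxuv with hxu | hxv
        · rcases hgmem with hgu | hgv
          · exact segu x hxu _ hgu hvx hkx hvg hkg
          · obtain ⟨a', ha'm, ha'T, ha'C⟩ := c1 (List.ne_nil_of_mem hxu)
            have hva' : Vtx.elt a' ∈ VSet d := mem_VSet_of_mem_pathList (humem _ ha'm)
            have hka' : (⟨Vtx.elt a', hva'⟩ : {x // x ∈ VSet d}) ∈ Kᶜ := huK _ ha'm hva'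
            exact (segu x hxu _ ha'm hvx hkx hva' hka').trans
              (goodreach a' ha'T ha'C hva' hka')
        · rcases hgmem with hgu | hgv
          · obtain ⟨a', ha'm, ha'T, ha'C⟩ := c2 (List.ne_nil_of_mem hxv)
            have hva' : Vtx.elt a' ∈ VSet d := mem_VSet_of_mem_pathList (hvmem _ ha'm)
            have hka' : (⟨Vtx.elt a', hva'⟩ : {x // x ∈ VSet d}) ∈ Kᶜ := hvK _ ha'm hva'
            exact (segv x hxv _ ha'm hvx hkx hva' hka').trans
              (goodreach a' ha'T ha'C hva' hka')
          · exact segv x hxv _ hgv hvx hkx hvg hkg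
      · obtain ⟨m, hmIcc, rfl⟩ := Finset.mem_image.1 hxc
        obtain ⟨hm1, hm2⟩ := Finset.mem_Icc.1 hmIcc
        exact reach_ctr_elt hd m g hm1 hm2 hgT (fun hv' hk' => hgC ⟨hv', hk'⟩)
          hvx hkx hvg hkg
    -- analysis of centers in K
    by_cases hctr : ∃ k, P (Vtx.ctr k)
    case pos =>
      obtain ⟨k, hPk⟩ := hctr
      obtain ⟨p0, hp0mem, hPp0⟩ := hPex
      have heltform : ∀ x ∈ pathList d, P x → ∃ a, x = Vtx.elt a ∧ a ∈ Tl d ∧ a.length = k := by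
        intro x hx hPx
        have hne : Vtx.ctr k ≠ x := fun e => ctr_not_mem_pathList (e ▸ hx)
        rcases (hPadj hPk hPx hne).2 with hc | hc | hc
        · exact absurd (chainAdj_mem hc).1 ctr_not_mem_pathList
        · rcases ctrAdj_cases hc with ⟨k', m', h1, h2, _⟩ | ⟨k', a, h1, h2, _, _, ha, hla⟩
          · exact absurd (h2 ▸ hx) ctr_not_mem_pathList
          · injection h1 with hk'
            exact ⟨a, h2, ha, hla.trans hk'.symm⟩
        · rcases ctrAdj_cases hc with ⟨k', m', h1, _⟩ | ⟨k', a, h1, _⟩ <;>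
            exact absurd (h1 ▸ hx) ctr_not_mem_pathList
      have huniq : ∀ x ∈ pathList d, P x → ∀ y ∈ pathList d, P y → x = y := by
        intro x hx hPx y hy hPy
        by_contra hxy
        obtain ⟨a, rfl, _, _⟩ := heltform x hx hPx
        obtain ⟨b, rfl, _, _⟩ := heltform y hy hPy
        rcases (hPadj hPx hPy hxy).2 with hc | hc | hc
        · obtain ⟨i, ⟨hm, hn⟩ | ⟨hm, hn⟩⟩ := hc <;> exact pathList_no_elt_elt hm hn
        · rcases ctrAdj_cases hc with ⟨_, _, h1, _⟩ | ⟨_, _, h1, _⟩ <;> cases h1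
        · rcases ctrAdj_cases hc with ⟨_, _, h1, _⟩ | ⟨_, _, h1, _⟩ <;> cases h1
      obtain ⟨a0, hp0eq, ha0T, ha0len⟩ := heltform p0 hp0mem hPp0
      have hk1d : 1 ≤ k := by
        have := (mem_Tl_length ha0T).1; omega
      have hkd : k ≤ d := by
        have := (mem_Tl_length ha0T).2; omega
      have hctreq : ∀ m, P (Vtx.ctr m) → m = k := by
        intro m hPm
        have hne : Vtx.ctr m ≠ p0 := fun e => ctr_not_mem_pathList (e ▸ hp0mem)
        rcases (hPadj hPm hPp0 hne).2 with hc | hc | hc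
        · exact absurd (chainAdj_mem hc).1 ctr_not_mem_pathList
        · rcases ctrAdj_cases hc with ⟨k', m', h1, h2, _⟩ | ⟨k', a, h1, h2, _, _, _, hla⟩
          · exact absurd (h2 ▸ hp0mem) ctr_not_mem_pathList
          · rw [hp0eq] at h2
            injection h2 with ha'
            injection h1 with hk'
            rw [hk', ← hla, ← ha']
            exact ha0len
        · rcases ctrAdj_cases hc with ⟨k', m', h1, _⟩ | ⟨k', a, h1, _⟩ <;>
            (rw [hp0eq] at h1; cases h1)
      refine assemble ?_ ?_
      · -- good vertex on the `u` side
        intro hune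
        by_cases hkone : k = 1
        · obtain ⟨x, u₁, rfl⟩ := List.exists_cons_of_ne_nil hune
          have h' : x :: (u₁ ++ (r ++ v)) =
              Vtx.elt [1] :: Vtx.sub 0 0 :: Vtx.elt [1,1] :: r3 := by
            have := hsplit.symm.trans h3
            simpa [List.append_assoc] using this
          injection h' with hx1 h''
          cases u₁ with
          | nil =>
            exfalso
            obtain ⟨y, r', rfl⟩ := List.exists_cons_of_ne_nil hrne
            have hcc : y :: (r' ++ v) = Vtx.sub 0 0 :: Vtx.elt [1,1] :: r3 := by
              simpa using h''
            injection hcc with hy _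
            obtain ⟨a, ha1, _, _⟩ := heltform y (hrmem y (by simp)) (hr y (by simp))
            rw [hy] at ha1
            cases ha1
          | cons x2 u₂ =>
            have hcc2 : x2 :: (u₂ ++ (r ++ v)) = Vtx.sub 0 0 :: Vtx.elt [1,1] :: r3 := by
              simpa using h''
            injection hcc2 with hx2 hcc3
            cases u₂ with
            | nil =>
              exfalso
              obtain ⟨y, r', rfl⟩ := List.exists_cons_of_ne_nil hrne
              have h4 : y :: (r' ++ v) = Vtx.elt [1,1] :: r3 := by simpa using hcc3
              injection h4 with hy _
              obtain ⟨a, ha1, _, hal⟩ := heltform y (hrmem y (by simp)) (hr y (by simp))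
              rw [hy] at ha1
              injection ha1 with ha2
              rw [← ha2] at hal
              simp at hal
              omega
            | cons x3 u₃ =>
              have h5 : x3 :: (u₃ ++ (r ++ v)) = Vtx.elt [1,1] :: r3 := by simpa using hcc3
              injection h5 with hx3 _
              refine ⟨[1,1], ?_, oneone_mem_Tl hd, ?_⟩
              · rw [← hx3]; simp
              · intro hP
                have h6 := hctreq _ hP
                simp at h6
                omega
        · refine ⟨[1], headU u (r ++ v) (by rw [hsplit]; simp) hune,
            one_mem_Tl (by omega), ?_⟩
          intro hP
          have h6 := hctreq _ hP
          simp at h6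
          exact hkone h6.symm
      · -- good vertex on the `v` side
        intro hvne
        by_cases hkone : k = 1
        · obtain ⟨v₂, z, hveq⟩ := (List.eq_nil_or_concat v).resolve_left hvne
          rw [List.concat_eq_append] at hveq
          subst hveq
          have e0 : (u ++ r ++ v₂) ++ [z] =
              (s3 ++ [Vtx.elt [3,4], Vtx.sub m3 0]) ++ [Vtx.elt [4]] := by
            calc (u ++ r ++ v₂) ++ [z] = u ++ r ++ (v₂ ++ [z]) := by simp
            _ = s3 ++ [Vtx.elt [3,4], Vtx.sub m3 0, Vtx.elt [4]] := hsplit.symm.trans hl3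
            _ = (s3 ++ [Vtx.elt [3,4], Vtx.sub m3 0]) ++ [Vtx.elt [4]] := by simp
          obtain ⟨e0', hz⟩ := List.append_inj' e0 (by simp)
          rcases List.eq_nil_or_concat v₂ with rfl | ⟨v₃, z2, hv2⟩
          · exfalso
            obtain ⟨r₁, y, hrc⟩ := (List.eq_nil_or_concat r).resolve_left hrne
            rw [List.concat_eq_append] at hrc
            have e1q : (u ++ r₁) ++ [y] = (s3 ++ [Vtx.elt [3,4]]) ++ [Vtx.sub m3 0] := by
              calc (u ++ r₁) ++ [y] = u ++ (r₁ ++ [y]) := by simp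
              _ = u ++ r ++ [] := by rw [← hrc]; simp
              _ = (s3 ++ [Vtx.elt [3,4]]) ++ [Vtx.sub m3 0] := by rw [e0']; simp
            obtain ⟨-, hy⟩ := List.append_inj' e1q (by simp)
            have hy' : y = Vtx.sub m3 0 := by simpa using hy
            have hyr : y ∈ r := by rw [hrc]; simp
            obtain ⟨a, ha1, _, _⟩ := heltform y (hrmem y hyr) (hr y hyr)
            rw [hy'] at ha1
            cases ha1
          · rw [List.concat_eq_append] at hv2
            subst hv2
            have e2q : (u ++ r ++ v₃) ++ [z2] = (s3 ++ [Vtx.elt [3,4]]) ++ [Vtx.sub m3 0] := by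
              calc (u ++ r ++ v₃) ++ [z2] = u ++ r ++ (v₃ ++ [z2]) := by simp
              _ = (s3 ++ [Vtx.elt [3,4]]) ++ [Vtx.sub m3 0] := by rw [e0']; simp
            obtain ⟨e2', hz2⟩ := List.append_inj' e2q (by simp)
            rcases List.eq_nil_or_concat v₃ with rfl | ⟨v₄, z1, hv3⟩
            · exfalso
              obtain ⟨r₁, y, hrc⟩ := (List.eq_nil_or_concat r).resolve_left hrne
              rw [List.concat_eq_append] at hrc
              have e3q : (u ++ r₁) ++ [y] = s3 ++ [Vtx.elt [3,4]] := by
                calc (u ++ r₁) ++ [y] = u ++ (r₁ ++ [y]) := by simp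
                _ = u ++ r ++ [] := by rw [← hrc]; simp
                _ = s3 ++ [Vtx.elt [3,4]] := by rw [e2']
              obtain ⟨-, hy⟩ := List.append_inj' e3q (by simp)
              have hy' : y = Vtx.elt [3,4] := by simpa using hy
              have hyr : y ∈ r := by rw [hrc]; simp
              obtain ⟨a, ha1, _, hal⟩ := heltform y (hrmem y hyr) (hr y hyr)
              rw [hy'] at ha1
              injection ha1 with ha2
              rw [← ha2] at hal
              simp at hal
              omega
            · rw [List.concat_eq_append] at hv3
              subst hv3
              have e4q : (u ++ r ++ v₄) ++ [z1] = s3 ++ [Vtx.elt [3,4]] := by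
                calc (u ++ r ++ v₄) ++ [z1] = u ++ r ++ (v₄ ++ [z1]) := by simp
                _ = s3 ++ [Vtx.elt [3,4]] := by rw [e2']
              obtain ⟨-, hz1⟩ := List.append_inj' e4q (by simp)
              have hz1' : z1 = Vtx.elt [3,4] := by simpa using hz1
              refine ⟨[3,4], ?_, threefour_mem_Tl hd, ?_⟩
              · rw [← hz1']; simp
              · intro hP
                have h6 := hctreq _ hP
                simp at h6
                omega
        · refine ⟨[4], lastV (u ++ r) v (by rw [hsplit]) hvne,
            four_mem_Tl (by omega), ?_⟩
          intro hP
          have h6 := hctreq _ hP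
          simp at h6
          exact hkone h6.symm
    case neg =>
      refine assemble ?_ ?_
      · intro hune
        refine ⟨[1], headU u (r ++ v) (by rw [hsplit]; simp) hune,
          one_mem_Tl (by omega), fun hP => hctr ⟨_, hP⟩⟩
      · intro hvne
        refine ⟨[4], lastV (u ++ r) v (by rw [hsplit]) hvne,
          four_mem_Tl (by omega), fun hP => hctr ⟨_, hP⟩⟩
  · -- CASE A : no path vertex is in K
    have hsurv : ∀ x ∈ pathList d, ∀ hv' : x ∈ VSet d,
        (⟨x, hv'⟩ : {x // x ∈ VSet d}) ∉ K := by
      intro x hx hv' hk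
      exact hPex ⟨x, hx, ⟨hv', hk⟩⟩
    have h1T : [1] ∈ Tl d := one_mem_Tl (by omega)
    have h1p : Vtx.elt [1] ∈ pathList d := elt_mem_pathList h1T
    have hv1 : Vtx.elt [1] ∈ VSet d := mem_VSet_of_mem_pathList h1p
    have hk1 : (⟨Vtx.elt [1], hv1⟩ : {x // x ∈ VSet d}) ∈ Kᶜ := hsurv _ h1p hv1
    refine ⟨⟨⟨Vtx.elt [1], hv1⟩, hk1⟩, ?_⟩
    rintro ⟨⟨x, hvx⟩, hkx⟩
    rcases Finset.mem_union.1 hvx with hxp | hxc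
    · exact reach_in_segment (pathList d) [] [] (by simp) hsurv _ h1p _
        (List.mem_toFinset.1 hxp) hv1 hk1 hvx hkx
    · obtain ⟨m, hmIcc, rfl⟩ := Finset.mem_image.1 hxc
      obtain ⟨hm1, hm2⟩ := Finset.mem_Icc.1 hmIcc
      obtain ⟨b, hb, hbl⟩ := exists_mem_Tl_length hm1 hm2
      have hbp : Vtx.elt b ∈ pathList d := elt_mem_pathList hb
      have hvb : Vtx.elt b ∈ VSet d := mem_VSet_of_mem_pathList hbp
      have hkb : (⟨Vtx.elt b, hvb⟩ : {x // x ∈ VSet d}) ∈ Kᶜ := hsurv _ hbp hvb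
      have r1 := reach_in_segment (pathList d) [] [] (by simp) hsurv _ h1p _ hbp hv1 hk1 hvb hkb
      have r2 : ((Gd d).induce Kᶜ).Adj ⟨⟨Vtx.ctr m, hvx⟩, hkx⟩ ⟨⟨Vtx.elt b, hvb⟩, hkb⟩ :=
        induce_adj _ _ _ _ (gdadj_ctr_elt hm1 hm2 hb hbl)
      exact r1.trans r2.symm.reachable


/-- For `d ≥ 2` the graph `G_d` has no clique cutset. -/
theorem stmt10 (d : ℕ) (hd : 2 ≤ d) (K : Set {x // x ∈ VSet d})
    (hK : (Gd d).IsClique K) : ((Gd d).induce Kᶜ).Connected :=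
  stmt10_aux d hd K hK
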